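/- Let r > 0 and w, c > 0, and for a square-integrable function f : ℝ → ℝ on [0,1] define J(f) = ∫₀¹ ( r·f(α) − f(α)²/2 − (w/(2c))·( ∫_α¹ f(t) dt )² ) dα. Let f*(α) = r · cosh((1−α)·√(w/c)) / cosh(√(w/c)). Then f* maximizes J over all square-integrable functions: J(f) ≤ J(f*) for every square-integrable f : ℝ → ℝ on [0,1]. -/

import Mathlib

open MeasureTheory

private theorem fubini_ibp (ds g : ℝ → ℝ) (hds : Continuous ds)
    (hg : IntegrableOn g (Set.Icc (0:ℝ) 1) volume) :
    ∫ α in (0:ℝ)..1, ds α * ∫ t in α..1, g t =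
    ∫ t in (0:ℝ)..1, (∫ α in (0:ℝ)..t, ds α) * g t := by
  have hgI : IntegrableOn g (Set.Ioc (0:ℝ) 1) volume := hg.mono_set Set.Ioc_subset_Icc_self
  set μ := volume.restrict (Set.Ioc (0:ℝ) 1) with hμ
  set K : ℝ × ℝ → ℝ := fun p => if p.1 < p.2 then ds p.1 * g p.2 else 0 with hK
  have hmeas : AEStronglyMeasurable K (μ.prod μ) := by
    have h1 : AEStronglyMeasurable (fun p : ℝ × ℝ => ds p.1 * g p.2) (μ.prod μ) :=
      (hds.aestronglyMeasurable.comp_fst).mul hgI.aestronglyMeasurable.comp_snd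
    have hset : MeasurableSet {p : ℝ × ℝ | p.1 < p.2} :=
      measurableSet_lt measurable_fst measurable_snd
    have hkind : K = Set.indicator {p : ℝ × ℝ | p.1 < p.2} (fun p => ds p.1 * g p.2) := by
      funext p; by_cases h : p.1 < p.2 <;> simp [hK, Set.indicator, h]
    rw [hkind]
    exact h1.indicator hset
  obtain ⟨C, hC⟩ := (isCompact_Icc (a := (0:ℝ)) (b := 1)).exists_bound_of_continuousOn
    hds.continuousOn
  have hbound_int : Integrable (fun p : ℝ × ℝ => C * ‖g p.2‖) (μ.prod μ) :=
    (integrable_const C).mul_prod hgI.norm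
  have hae : ∀ᵐ p ∂(μ.prod μ), ‖K p‖ ≤ C * ‖g p.2‖ := by
    rw [hμ, Measure.prod_restrict]
    filter_upwards [ae_restrict_mem (measurableSet_Ioc.prod measurableSet_Ioc)] with p hp
    obtain ⟨hp1, hp2⟩ := hp
    by_cases h : p.1 < p.2
    · simp only [hK, if_pos h, norm_mul]
      exact mul_le_mul_of_nonneg_right (hC p.1 (Set.Ioc_subset_Icc_self hp1)) (norm_nonneg _)
    · simp only [hK, if_neg h, norm_zero]
      have hC0 : 0 ≤ C := le_trans (norm_nonneg _) (hC 0 (by norm_num))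
      positivity
  have hKint : Integrable K (μ.prod μ) := Integrable.mono' hbound_int hmeas hae
  have hswap : (∫ α, ∫ t, K (α, t) ∂μ ∂μ) = ∫ t, ∫ α, K (α, t) ∂μ ∂μ :=
    integral_integral_swap hKint
  have hleft : ∀ α ∈ Set.Ioc (0:ℝ) 1, (∫ t, K (α, t) ∂μ) = ds α * ∫ t in α..1, g t := by
    intro α hα
    have h1 : (fun t => K (α, t)) = (Set.Ioi α).indicator (fun t => ds α * g t) := by
      funext t; by_cases h : α < t <;> simp [hK, Set.indicator, h, Set.mem_Ioi]
    have hseteq : Set.Ioc (0:ℝ) 1 ∩ Set.Ioi α = Set.Ioc α 1 := by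
      ext x
      simp only [Set.mem_inter_iff, Set.mem_Ioc, Set.mem_Ioi]
      constructor
      · rintro ⟨⟨_, h1⟩, h2⟩; exact ⟨h2, h1⟩
      · rintro ⟨h2, h1⟩; exact ⟨⟨lt_trans hα.1 h2, h1⟩, h2⟩
    rw [hμ, h1, setIntegral_indicator measurableSet_Ioi, hseteq,
      MeasureTheory.integral_const_mul, ← intervalIntegral.integral_of_le hα.2]
  have hright : ∀ t ∈ Set.Ioc (0:ℝ) 1, (∫ α, K (α, t) ∂μ) = (∫ α in (0:ℝ)..t, ds α) * g t := by
    intro t ht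
    have h1 : (fun α => K (α, t)) = (Set.Iio t).indicator (fun α => ds α * g t) := by
      funext α; by_cases h : α < t <;> simp [hK, Set.indicator, h, Set.mem_Iio]
    have hseteq : Set.Ioc (0:ℝ) 1 ∩ Set.Iio t = Set.Ioo 0 t := by
      ext x
      simp only [Set.mem_inter_iff, Set.mem_Ioc, Set.mem_Ioo, Set.mem_Iio]
      constructor
      · rintro ⟨⟨h1, _⟩, h2⟩; exact ⟨h1, h2⟩
      · rintro ⟨h1, h2⟩; exact ⟨⟨h1, le_trans h2.le ht.2⟩, h2⟩
    rw [hμ, h1, setIntegral_indicator measurableSet_Iio, hseteq,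
      MeasureTheory.integral_mul_const, ← MeasureTheory.integral_Ioc_eq_integral_Ioo,
      ← intervalIntegral.integral_of_le ht.1.le]
  calc ∫ α in (0:ℝ)..1, ds α * ∫ t in α..1, g t
      = ∫ α in Set.Ioc (0:ℝ) 1, ds α * ∫ t in α..1, g t :=
        intervalIntegral.integral_of_le zero_le_one
    _ = ∫ α in Set.Ioc (0:ℝ) 1, ∫ t, K (α, t) ∂μ :=
        setIntegral_congr_fun measurableSet_Ioc fun α hα => (hleft α hα).symm
    _ = ∫ t, ∫ α, K (α, t) ∂μ ∂μ := hswap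
    _ = ∫ t in Set.Ioc (0:ℝ) 1, (∫ α in (0:ℝ)..t, ds α) * g t :=
        setIntegral_congr_fun measurableSet_Ioc fun t ht => hright t ht
    _ = ∫ t in (0:ℝ)..1, (∫ α in (0:ℝ)..t, ds α) * g t :=
        (intervalIntegral.integral_of_le zero_le_one).symm

/-- The hyperbolic-cosine profile `f*(α) = r cosh((1−α)√(w/c)) / cosh(√(w/c))` maximizes
the unconstrained Hotelling station welfare `J` over square-integrable functions. -/
theorem hotelling_unconstrained_maximizer
    (r w c : ℝ) (hr : 0 < r) (hw : 0 < w) (hc : 0 < c)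
    (J : (ℝ → ℝ) → ℝ)
    (hJ : ∀ f : ℝ → ℝ, J f = ∫ α in (0 : ℝ)..1,
      (r * f α - (f α) ^ 2 / 2 - (w / (2 * c)) * (∫ t in α..1, f t) ^ 2))
    (fstar : ℝ → ℝ)
    (hfstar : ∀ α, fstar α =
      r * Real.cosh ((1 - α) * Real.sqrt (w / c)) / Real.cosh (Real.sqrt (w / c))) :
    ∀ f : ℝ → ℝ, MemLp f 2 (volume.restrict (Set.Icc (0 : ℝ) 1)) → J f ≤ J fstar := by
  intro f hf
  have hwc : (0:ℝ) < w / c := div_pos hw hc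
  set l : ℝ := Real.sqrt (w / c) with hldef
  have hl0 : 0 < l := Real.sqrt_pos.mpr hwc
  have hll : l * l = w / c := Real.mul_self_sqrt hwc.le
  have hcoshpos : (0:ℝ) < Real.cosh l := Real.cosh_pos l
  set fs : ℝ → ℝ := fun α => r * Real.cosh ((1 - α) * l) / Real.cosh l with hfsdef
  have hfseq : fstar = fs := by rw [hfsdef]; exact funext hfstar
  set ds : ℝ → ℝ := fun α => -(r * l) * Real.sinh ((1 - α) * l) / Real.cosh l with hdsdef
  have hfs_cont : Continuous fs := by rw [hfsdef]; fun_prop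
  have hds_cont : Continuous ds := by rw [hdsdef]; fun_prop
  have hderiv : ∀ x : ℝ, HasDerivAt fs (ds x) x := by
    intro x
    have h1 : HasDerivAt (fun x : ℝ => (1 - x) * l) (-1 * l) x :=
      ((hasDerivAt_id x).const_sub 1).mul_const l
    have h2 := (h1.cosh.const_mul r).div_const (Real.cosh l)
    rw [hfsdef, hdsdef]
    refine h2.congr_deriv ?_
    ring
  have hfs0 : fs 0 = r := by
    simp only [hfsdef]
    norm_num
    field_simp
  have hFval : ∀ α : ℝ, (∫ t in α..1, fs t) = r * Real.sinh ((1 - α) * l) / (l * Real.cosh l) := by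
    intro α
    have hA : ∀ t : ℝ, HasDerivAt (fun t : ℝ => -(r * Real.sinh ((1 - t) * l)) / (l * Real.cosh l))
        (fs t) t := by
      intro t
      have h1 : HasDerivAt (fun t : ℝ => (1 - t) * l) (-1 * l) t :=
        ((hasDerivAt_id t).const_sub 1).mul_const l
      have h2 := ((h1.sinh.const_mul r).neg).div_const (l * Real.cosh l)
      simp only [hfsdef]
      refine h2.congr_deriv ?_
      field_simp
    rw [intervalIntegral.integral_eq_sub_of_hasDerivAt (fun t _ => hA t)
      (hfs_cont.intervalIntegrable _ _)]
    norm_num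
    ring
  have hkey : ∀ α : ℝ, ds α = -((w / c) * (∫ t in α..1, fs t)) := by
    intro α
    rw [hFval α, ← hll]
    simp only [hdsdef]
    field_simp
  -- integrability setup
  have hIcc : Set.uIcc (0:ℝ) 1 = Set.Icc (0:ℝ) 1 := Set.uIcc_of_le zero_le_one
  have toII : ∀ {φ : ℝ → ℝ}, IntegrableOn φ (Set.Icc (0:ℝ) 1) volume →
      IntervalIntegrable φ volume 0 1 := by
    intro φ h
    apply IntegrableOn.intervalIntegrable
    rwa [hIcc]
  have hfint : IntegrableOn f (Set.Icc (0:ℝ) 1) volume := hf.integrable (by norm_num)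
  set g : ℝ → ℝ := fun x => f x - fs x with hgdef
  have hfsL2 : MemLp fs 2 (volume.restrict (Set.Icc (0:ℝ) 1)) := by
    obtain ⟨C, hC⟩ := (isCompact_Icc (a := (0:ℝ)) (b := 1)).exists_bound_of_continuousOn
      hfs_cont.continuousOn
    refine MemLp.of_bound hfs_cont.aestronglyMeasurable C ?_
    filter_upwards [ae_restrict_mem measurableSet_Icc] with x hx using hC x hx
  have hgL2 : MemLp g 2 (volume.restrict (Set.Icc (0:ℝ) 1)) := hf.sub hfsL2
  have hgint : IntegrableOn g (Set.Icc (0:ℝ) 1) volume := hgL2.integrable (by norm_num)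
  have hg2int : IntegrableOn (fun x => g x ^ 2) (Set.Icc (0:ℝ) 1) volume := hgL2.integrable_sq
  set G : ℝ → ℝ := fun x => ∫ t in x..1, g t with hGdef
  have hGcont : ContinuousOn G (Set.Icc (0:ℝ) 1) := by
    have h := intervalIntegral.continuousOn_primitive_interval_left (μ := volume) (f := g)
      (a := (0:ℝ)) (b := 1) (by rw [hIcc]; exact hgint)
    rw [hIcc] at h
    exact h
  have hFcont : Continuous (fun α : ℝ => ∫ t in α..1, fs t) := by
    have h : (fun α : ℝ => ∫ t in α..1, fs t)
        = fun α => r * Real.sinh ((1 - α) * l) / (l * Real.cosh l) := funext hFval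
    rw [h]; fun_prop
  have hlin1 : IntegrableOn (fun x => g x * (r - fs x)) (Set.Icc (0:ℝ) 1) volume :=
    hgint.mul_continuousOn ((continuous_const.sub hfs_cont).continuousOn) isCompact_Icc
  have hlin2 : IntegrableOn (fun x => ds x * G x) (Set.Icc (0:ℝ) 1) volume :=
    (hds_cont.continuousOn.mul hGcont).integrableOn_Icc
  have hquadint : IntegrableOn (fun x => g x ^ 2 / 2 + w / (2 * c) * G x ^ 2)
      (Set.Icc (0:ℝ) 1) volume :=
    (hg2int.div_const 2).add ((continuousOn_const.mul (hGcont.pow 2)).integrableOn_Icc)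
  have IA : IntervalIntegrable
      (fun α => r * fs α - fs α ^ 2 / 2 - w / (2 * c) * (∫ t in α..1, fs t) ^ 2) volume 0 1 :=
    (((continuous_const.mul hfs_cont).sub ((hfs_cont.pow 2).div_const 2)).sub
      (continuous_const.mul (hFcont.pow 2))).intervalIntegrable _ _
  have IB : IntervalIntegrable (fun α => g α * (r - fs α) + ds α * G α) volume 0 1 :=
    toII (hlin1.add hlin2)
  have IC : IntervalIntegrable (fun α => g α ^ 2 / 2 + w / (2 * c) * G α ^ 2) volume 0 1 :=
    toII hquadint
  -- pointwise decomposition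
  have hsplit : Set.EqOn
      (fun α => r * f α - f α ^ 2 / 2 - w / (2 * c) * (∫ t in α..1, f t) ^ 2)
      (fun α => (r * fs α - fs α ^ 2 / 2 - w / (2 * c) * (∫ t in α..1, fs t) ^ 2)
        + (g α * (r - fs α) + ds α * G α)
        - (g α ^ 2 / 2 + w / (2 * c) * G α ^ 2))
      (Set.uIcc (0:ℝ) 1) := by
    intro α hα
    rw [hIcc] at hα
    have hα' : α ∈ Set.uIcc (0:ℝ) 1 := by rw [hIcc]; exact hα
    have hfII : IntervalIntegrable f volume α 1 :=
      (toII hfint).mono_set (Set.uIcc_subset_uIcc hα' Set.right_mem_uIcc)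
    have h2 : G α = (∫ t in α..1, f t) - ∫ t in α..1, fs t := by
      simp only [hGdef, hgdef]
      exact intervalIntegral.integral_sub hfII (hfs_cont.intervalIntegrable _ _)
    have hsum : (∫ t in α..1, f t) = (∫ t in α..1, fs t) + G α := by linarith
    have hgα : f α = fs α + g α := by simp [hgdef]
    simp only
    rw [hsum, hkey α, hgα]
    field_simp
    ring
  -- assemble
  rw [hfseq, hJ f, hJ fs]
  rw [intervalIntegral.integral_congr hsplit,
    intervalIntegral.integral_sub (IA.add IB) IC, intervalIntegral.integral_add IA IB]
  have hquad_nonneg : 0 ≤ ∫ α in (0:ℝ)..1, (g α ^ 2 / 2 + w / (2 * c) * G α ^ 2) :=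
    intervalIntegral.integral_nonneg zero_le_one (fun u hu => by positivity)
  have hds_int : ∀ t : ℝ, (∫ x in (0:ℝ)..t, ds x) = fs t - r := by
    intro t
    rw [intervalIntegral.integral_eq_sub_of_hasDerivAt (fun x _ => hderiv x)
      (hds_cont.intervalIntegrable _ _), hfs0]
  have hlin_zero : (∫ α in (0:ℝ)..1, (g α * (r - fs α) + ds α * G α)) = 0 := by
    rw [intervalIntegral.integral_add (toII hlin1) (toII hlin2)]
    have h2 : (∫ α in (0:ℝ)..1, ds α * G α) = ∫ t in (0:ℝ)..1, (fs t - r) * g t := by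
      simp only [hGdef]
      rw [fubini_ibp ds g hds_cont hgint]
      congr 1
      funext t
      rw [hds_int t]
    rw [h2]
    have h3 : (∫ t in (0:ℝ)..1, (fs t - r) * g t) = - ∫ t in (0:ℝ)..1, g t * (r - fs t) := by
      rw [← intervalIntegral.integral_neg]
      congr 1
      funext t
      ring
    rw [h3]
    ring
  rw [hlin_zero]
  linarith
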